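/- arXiv:math/0608083 — 3 statements merged into one kernel-verified Lean document; each statement's English description precedes it below -/
import Mathlib

section
/- For all finite simple graphs G and H and every n ≥ 1, α((G+H)^n) ≥ ∑_{k=0}^{n} C(n,k)·a_k·b_{n-k}, where a_k = α(G^k) for k ≥ 1, b_k = α(H^k) for k ≥ 1, and a_0 = b_0 = 1. -/
/-- The `k`-th strong power of a simple graph: vertices are `k`-tuples, and two distinct
tuples are adjacent iff in each coordinate the entries are equal or adjacent. -/
def gStrongPow {α : Type*} (G : SimpleGraph α) (k : ℕ) :
    SimpleGraph (Fin k → α) where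
  Adj u v := u ≠ v ∧ ∀ i, u i = v i ∨ G.Adj (u i) (v i)
  symm := by
    constructor
    rintro u v ⟨hne, h⟩
    exact ⟨hne.symm, fun i => (h i).imp Eq.symm (fun h' => G.adj_symm h')⟩
  loopless := ⟨fun u h => h.1 rfl⟩
/-- The independence number of a graph on a finite vertex type: the maximum size of a
set of pairwise non-adjacent vertices. -/
noncomputable def gIndepNum {α : Type*} [Fintype α] (G : SimpleGraph α) : ℕ :=
  sSup {n | ∃ s : Finset α, s.card = n ∧ (s : Set α).Pairwise (fun a b => ¬ G.Adj a b)}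

lemma gIndepNum_bddAbove {α : Type*} [Fintype α] (G : SimpleGraph α) :
    BddAbove {n | ∃ s : Finset α, s.card = n ∧ (s : Set α).Pairwise (fun a b => ¬ G.Adj a b)} :=
  ⟨Fintype.card α, fun _ ⟨s, hs, _⟩ => hs ▸ s.card_le_univ⟩

lemma le_gIndepNum {α : Type*} [Fintype α] (G : SimpleGraph α) {m : ℕ}
    (h : ∃ s : Finset α, s.card = m ∧ (s : Set α).Pairwise (fun a b => ¬ G.Adj a b)) :
    m ≤ gIndepNum G := le_csSup (gIndepNum_bddAbove G) h

lemma exists_indep_card {α : Type*} [Fintype α] (G : SimpleGraph α) :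
    ∃ s : Finset α, s.card = gIndepNum G ∧
      (s : Set α).Pairwise (fun a b => ¬ G.Adj a b) :=
by
  have h0 : 0 ∈ {n | ∃ s : Finset α, s.card = n ∧
      (s : Set α).Pairwise (fun a b => ¬ G.Adj a b)} := ⟨∅, by simp, by simp⟩
  exact Nat.sSup_mem ⟨0, h0⟩ (gIndepNum_bddAbove G)

lemma compl_card_eq {n : ℕ} (S : Finset (Fin n)) : Sᶜ.card = n - S.card := by
  simp [Finset.card_compl]

/-- Glue an `S`-indexed tuple in `α` and an `Sᶜ`-indexed tuple in `β` into an
`n`-tuple in `α ⊕ β`. -/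
def glue {α β : Type*} {n : ℕ} (S : Finset (Fin n))
    (p : (Fin S.card → α) × (Fin (n - S.card) → β)) (i : Fin n) : α ⊕ β :=
  if h : i ∈ S then Sum.inl (p.1 ((S.orderIsoOfFin rfl).symm ⟨i, h⟩))
  else Sum.inr (p.2 ((Sᶜ.orderIsoOfFin (compl_card_eq S)).symm ⟨i, Finset.mem_compl.2 h⟩))

lemma glue_pat {α β : Type*} {n : ℕ} (S : Finset (Fin n))
    (p : (Fin S.card → α) × (Fin (n - S.card) → β)) (i : Fin n) :
    (glue S p i).isLeft = true ↔ i ∈ S := by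
  unfold glue
  split <;> simp_all

lemma glue_evalL {α β : Type*} {n : ℕ} (S : Finset (Fin n))
    (p : (Fin S.card → α) × (Fin (n - S.card) → β)) (j : Fin S.card) :
    glue S p ((S.orderIsoOfFin rfl j : {x // x ∈ S}) : Fin n) = Sum.inl (p.1 j) := by
  have hm := (S.orderIsoOfFin rfl j).2
  unfold glue
  rw [dif_pos hm]
  have h1 : (⟨((S.orderIsoOfFin rfl j : {x // x ∈ S}) : Fin n), hm⟩ : {x // x ∈ S})
      = S.orderIsoOfFin rfl j := rfl
  rw [h1, OrderIso.symm_apply_apply]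

lemma glue_evalR {α β : Type*} {n : ℕ} (S : Finset (Fin n))
    (p : (Fin S.card → α) × (Fin (n - S.card) → β)) (j : Fin (n - S.card)) :
    glue S p ((Sᶜ.orderIsoOfFin (compl_card_eq S) j : {x // x ∈ Sᶜ}) : Fin n)
      = Sum.inr (p.2 j) := by
  have hm := (Sᶜ.orderIsoOfFin (compl_card_eq S) j).2
  have hm' : ((Sᶜ.orderIsoOfFin (compl_card_eq S) j : {x // x ∈ Sᶜ}) : Fin n) ∉ S :=
    Finset.mem_compl.1 hm
  unfold glue
  rw [dif_neg hm']
  have h1 : (⟨((Sᶜ.orderIsoOfFin (compl_card_eq S) j : {x // x ∈ Sᶜ}) : Fin n),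
      Finset.mem_compl.2 hm'⟩ : {x // x ∈ Sᶜ}) = Sᶜ.orderIsoOfFin (compl_card_eq S) j := rfl
  rw [h1, OrderIso.symm_apply_apply]

lemma glue_S_eq {α β : Type*} {n : ℕ} (S T : Finset (Fin n))
    (p : (Fin S.card → α) × (Fin (n - S.card) → β))
    (q : (Fin T.card → α) × (Fin (n - T.card) → β))
    (h : ∀ i, (glue S p i).isLeft = (glue T q i).isLeft) : S = T := by
  ext i
  rw [← glue_pat S p i, h i, glue_pat T q i]

lemma glue_injective {α β : Type*} {n : ℕ} (S : Finset (Fin n)) :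
    Function.Injective (glue (α := α) (β := β) S) := by
  intro p q h
  have h1 : p.1 = q.1 := by
    funext j
    have := congrFun h ((S.orderIsoOfFin rfl j : {x // x ∈ S}) : Fin n)
    rw [glue_evalL, glue_evalL] at this
    exact Sum.inl.inj this
  have h2 : p.2 = q.2 := by
    funext j
    have := congrFun h ((Sᶜ.orderIsoOfFin (compl_card_eq S) j : {x // x ∈ Sᶜ}) : Fin n)
    rw [glue_evalR, glue_evalR] at this
    exact Sum.inr.inj this
  exact Prod.ext h1 h2

/-- For finite simple graphs `G`, `H` and every `n ≥ 1`,
`α((G + H)^n) ≥ ∑_{k = 0}^{n} C(n, k) · a_k · b_{n - k}`, where `a_k = α(G^k)` and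
`b_k = α(H^k)` for `k ≥ 1`, and `a₀ = b₀ = 1`. -/
theorem indepNum_strongPow_sum_ge
    {α β : Type*} [Fintype α] [Fintype β] (G : SimpleGraph α) (H : SimpleGraph β)
    (n : ℕ) (hn : 1 ≤ n) (a b : ℕ → ℕ)
    (ha0 : a 0 = 1) (hb0 : b 0 = 1)
    (ha : ∀ k, 1 ≤ k → a k = gIndepNum (gStrongPow G k))
    (hb : ∀ k, 1 ≤ k → b k = gIndepNum (gStrongPow H k)) :
    ∑ k ∈ Finset.range (n + 1), n.choose k * a k * b (n - k) ≤
      gIndepNum (gStrongPow (G ⊕g H) n) := by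
  classical
  have hAex : ∀ k, ∃ A : Finset (Fin k → α), A.card = a k ∧
      (A : Set (Fin k → α)).Pairwise (fun u v => ¬ (gStrongPow G k).Adj u v) := by
    intro k
    rcases Nat.eq_zero_or_pos k with hk | hk
    · subst hk
      exact ⟨{fun i => i.elim0}, by simp [ha0], by simp⟩
    · rw [ha k hk]
      exact exists_indep_card _
  have hBex : ∀ k, ∃ B : Finset (Fin k → β), B.card = b k ∧
      (B : Set (Fin k → β)).Pairwise (fun u v => ¬ (gStrongPow H k).Adj u v) := by
    intro k
    rcases Nat.eq_zero_or_pos k with hk | hk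
    · subst hk
      exact ⟨{fun i => i.elim0}, by simp [hb0], by simp⟩
    · rw [hb k hk]
      exact exists_indep_card _
  choose A hAcard hAindep using hAex
  choose B hBcard hBindep using hBex
  set T : Finset (Fin n → α ⊕ β) :=
    Finset.univ.biUnion
      (fun S : Finset (Fin n) => ((A S.card) ×ˢ (B (n - S.card))).image (glue S)) with hTdef
  have hTindep : ((T : Set (Fin n → α ⊕ β))).Pairwise
      (fun u v => ¬ (gStrongPow (G ⊕g H) n).Adj u v) := by
    intro u hu v hv huv hadj
    obtain ⟨hne, hall⟩ := hadj
    rw [Finset.mem_coe, hTdef, Finset.mem_biUnion] at hu hv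
    obtain ⟨S, -, hu⟩ := hu
    obtain ⟨S', -, hv⟩ := hv
    rw [Finset.mem_image] at hu hv
    obtain ⟨p, hpmem, hpu⟩ := hu
    obtain ⟨q, hqmem, hqv⟩ := hv
    have hside : ∀ i, (u i).isLeft = (v i).isLeft := by
      intro i
      rcases hall i with h | h
      · rw [h]
      · cases hui : u i <;> cases hvi : v i <;> rw [hui, hvi] at h <;>
          simp_all [SimpleGraph.sum]
    subst hpu hqv
    have hST : S = S' := glue_S_eq S S' p q hside
    subst hST
    rw [Finset.mem_product] at hpmem hqmem
    by_cases h1 : p.1 = q.1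
    · have h2 : p.2 ≠ q.2 := fun h2 => hne (congrArg (glue S) (Prod.ext h1 h2))
      refine hBindep (n - S.card) hqmem.2 hpmem.2 (Ne.symm h2) ?_
      refine ⟨h2.symm, fun j => ?_⟩
      have := hall ((Sᶜ.orderIsoOfFin (compl_card_eq S) j : {x // x ∈ Sᶜ}) : Fin n)
      rw [glue_evalR, glue_evalR] at this
      rcases this with h | h
      · exact Or.inl (Sum.inr.inj h).symm
      · exact Or.inr (by simpa [SimpleGraph.sum] using h.symm)
    · refine hAindep S.card hqmem.1 hpmem.1 (Ne.symm h1) ?_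
      refine ⟨fun h => h1 h.symm, fun j => ?_⟩
      have := hall ((S.orderIsoOfFin rfl j : {x // x ∈ S}) : Fin n)
      rw [glue_evalL, glue_evalL] at this
      rcases this with h | h
      · exact Or.inl (Sum.inl.inj h).symm
      · exact Or.inr (by simpa [SimpleGraph.sum] using h.symm)
  have hdisj : ∀ S ∈ (Finset.univ : Finset (Finset (Fin n))),
      ∀ S' ∈ (Finset.univ : Finset (Finset (Fin n))), S ≠ S' →
      Disjoint ((A S.card ×ˢ B (n - S.card)).image (glue S))
        ((A S'.card ×ˢ B (n - S'.card)).image (glue S')) := by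
    intro S _ S' _ hne
    rw [Finset.disjoint_left]
    rintro w hw hw'
    rw [Finset.mem_image] at hw hw'
    obtain ⟨p, -, hp⟩ := hw
    obtain ⟨q, -, hq⟩ := hw'
    exact hne (glue_S_eq S S' p q (fun i => by rw [hp, hq]))
  have hcard : T.card = ∑ S : Finset (Fin n), a S.card * b (n - S.card) := by
    rw [hTdef, Finset.card_biUnion hdisj]
    refine Finset.sum_congr rfl fun S _ => ?_
    rw [Finset.card_image_of_injective _ (glue_injective S), Finset.card_product,
      hAcard, hBcard]
  have hsum : ∑ S : Finset (Fin n), a S.card * b (n - S.card)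
      = ∑ k ∈ Finset.range (n + 1), n.choose k * a k * b (n - k) := by
    rw [← Finset.powerset_univ, Finset.sum_powerset_apply_card
      (fun m => a m * b (n - m))]
    simp [Finset.card_univ, mul_assoc]
  refine le_gIndepNum _ ⟨T, ?_, hTindep⟩
  rw [hcard, hsum]
end

section
/- Let r ≥ s ≥ 1 and m ≥ 1, and for each j ∈ {1,…,m} let P_j be a finite set of primes, each greater than √s, such that ⋂_{j=1}^{m} P_j = ∅. For each j define the graph G_j whose vertex set is the collection of all s-element subsets of {1,…,r}, where distinct A and B are adjacent iff |A∩B| ≡ s (mod q) for some q ∈ P_j. Then the set of diagonal m-tuples {(A^{(1)}, A^{(2)}, …, A^{(m)}) : A an s-element subset of {1,…,r}}, where A^{(j)} denotes the copy of A in the j-th summand of the disjoint union G₁+⋯+G_m, is an independent set of size C(r,s) in the m-th strong power (G₁+⋯+G_m)^m; consequently c(G₁+⋯+G_m) ≥ C(r,s)^{1/m}. -/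
/-- Disjoint union of a family of simple graphs. -/
def gSigmaSum {ι : Type*} {α : ι → Type*} (G : ∀ i, SimpleGraph (α i)) :
    SimpleGraph (Σ i, α i) where
  Adj x y := ∃ i a b, (G i).Adj a b ∧ x = ⟨i, a⟩ ∧ y = ⟨i, b⟩
  symm := by
    constructor
    rintro _ _ ⟨i, a, b, h, rfl, rfl⟩
    exact ⟨i, b, a, (G i).adj_symm h, rfl, rfl⟩
  loopless := by
    constructor
    rintro _ ⟨i, a, b, h, rfl, he⟩
    injection he with h1 h2
    exact (G i).irrefl (h2 ▸ h)
/-- The Shannon capacity `c(G) = sup_{k ≥ 1} α(G^k)^(1/k)`. -/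
noncomputable def gShannonCapacity {α : Type*} [Fintype α] (G : SimpleGraph α) : ℝ :=
  ⨆ k : ℕ, (gIndepNum (gStrongPow G (k + 1)) : ℝ) ^ ((1 : ℝ) / (k + 1))

/-- The graph on all `s`-element subsets of `{1, …, r}` in which distinct `A`, `B` are
adjacent iff `|A ∩ B| ≡ s (mod q)` for some `q ∈ P`. -/
def gInterGraph (r s : ℕ) (P : Finset ℕ) :
    SimpleGraph {A : Finset (Fin r) // A.card = s} where
  Adj A B := A ≠ B ∧ ∃ q ∈ P, (A.1 ∩ B.1).card ≡ s [MOD q]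
  symm := by
    constructor
    rintro A B ⟨hne, q, hqP, hmod⟩
    exact ⟨hne.symm, q, hqP, by rwa [Finset.inter_comm]⟩
  loopless := ⟨fun A h => h.1 rfl⟩

lemma gIndepNum_le_card {β : Type*} [Fintype β] (H : SimpleGraph β) :
    gIndepNum H ≤ Fintype.card β := by
  apply csSup_le'
  rintro n ⟨t, rfl, -⟩
  exact t.card_le_univ

/-- Let `r ≥ s ≥ 1`, `m ≥ 1`, and for each `j` let `P j` be a finite set of primes, each
greater than `√s`, with `⋂_j P j = ∅`.  Then the set of diagonal `m`-tuples is an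
independent set of size `C(r, s)` in the `m`-th strong power of the disjoint union
`G₁ + ⋯ + G_m` of the graphs `G_j = gInterGraph r s (P j)`;
consequently `c(G₁ + ⋯ + G_m) ≥ C(r, s)^(1/m)`. -/
theorem diagonal_indep_and_shannonCapacity_ge
    (r s m : ℕ) (hs : 1 ≤ s) (hsr : s ≤ r) (hm : 1 ≤ m)
    (P : Fin m → Finset ℕ)
    (hP : ∀ j, ∀ q ∈ P j, q.Prime ∧ s < q * q)
    (hinter : ¬ ∃ q, ∀ j, q ∈ P j) :
    (Set.range (fun A : {A : Finset (Fin r) // A.card = s} =>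
        (fun j : Fin m => (⟨j, A⟩ : Σ _ : Fin m, {A : Finset (Fin r) // A.card = s})))).Pairwise
      (fun x y => ¬ (gStrongPow (gSigmaSum (fun j => gInterGraph r s (P j))) m).Adj x y) ∧
    (Set.range (fun A : {A : Finset (Fin r) // A.card = s} =>
        (fun j : Fin m => (⟨j, A⟩ : Σ _ : Fin m, {A : Finset (Fin r) // A.card = s})))).ncard
      = r.choose s ∧
    (r.choose s : ℝ) ^ ((1 : ℝ) / m) ≤
      gShannonCapacity (gSigmaSum (fun j => gInterGraph r s (P j))) := by
  classical
  have j0 : Fin m := ⟨0, hm⟩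
  set V := {A : Finset (Fin r) // A.card = s} with hV
  set G := gSigmaSum (fun j => gInterGraph r s (P j)) with hG
  set diag : V → (Fin m → Σ _ : Fin m, V) := fun A => fun j => ⟨j, A⟩ with hdiag
  have key : ∀ A B : V, A ≠ B → ¬ ∀ j : Fin m, (gInterGraph r s (P j)).Adj A B := by
    intro A B hAB hall
    have htle : (A.1 ∩ B.1).card ≤ s :=
      le_trans (Finset.card_le_card Finset.inter_subset_left) (le_of_eq A.2)
    have ht : (A.1 ∩ B.1).card < s := by
      rcases lt_or_eq_of_le htle with h | h
      · exact h
      · exfalso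
        have h1 : A.1 ∩ B.1 = A.1 :=
          Finset.eq_of_subset_of_card_le Finset.inter_subset_left (by rw [h, A.2])
        have h2 : A.1 ⊆ B.1 := by rw [← h1]; exact Finset.inter_subset_right
        have : A.1 = B.1 := Finset.eq_of_subset_of_card_le h2 (by rw [A.2, B.2])
        exact hAB (Subtype.ext this)
    set t := (A.1 ∩ B.1).card with htd
    choose q hqP hq using fun j => (hall j).2
    have hdvd : ∀ j, q j ∣ s - t := fun j => (Nat.modEq_iff_dvd' ht.le).mp (hq j)
    have hpos : 0 < s - t := Nat.sub_pos_of_lt ht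
    have heq : ∀ j, q j = q j0 := by
      intro j
      by_contra hne
      have hp1 := (hP j _ (hqP j)).1
      have hp2 := (hP j0 _ (hqP j0)).1
      have hco : Nat.Coprime (q j) (q j0) := (Nat.coprime_primes hp1 hp2).mpr hne
      have hmd : q j * q j0 ∣ s - t := Nat.Coprime.mul_dvd_of_dvd_of_dvd hco (hdvd j) (hdvd j0)
      have hle : q j * q j0 ≤ s - t := Nat.le_of_dvd hpos hmd
      have h1 := (hP j _ (hqP j)).2
      have h2 := (hP j0 _ (hqP j0)).2
      have hgt : s < q j * q j0 := by
        by_contra hgt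
        push_neg at hgt
        have h3 : (q j * q j0) * (q j * q j0) ≤ s * s := Nat.mul_le_mul hgt hgt
        have h4 : s * s < (q j * q j) * (q j0 * q j0) := Nat.mul_lt_mul'' h1 h2
        have h5 : (q j * q j) * (q j0 * q j0) = (q j * q j0) * (q j * q j0) := by ring
        linarith
      omega
    exact hinter ⟨q j0, fun j => heq j ▸ hqP j⟩
  have indep : (Set.range diag).Pairwise
      (fun x y => ¬ (gStrongPow G m).Adj x y) := by
    rintro x ⟨A, rfl⟩ y ⟨B, rfl⟩ hxy ⟨hne, hadj⟩
    have hAB : A ≠ B := by rintro rfl; exact hxy rfl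
    refine key A B hAB fun j => ?_
    rcases hadj j with heqj | ⟨i, a, b, hab, h1, h2⟩
    · exact absurd (by simpa [hdiag] using heqj) hAB
    · simp only [hdiag, Sigma.mk.inj_iff] at h1 h2
      obtain ⟨rfl, h1'⟩ := h1
      obtain ⟨-, h2'⟩ := h2
      obtain rfl := eq_of_heq h1'
      obtain rfl := eq_of_heq h2'
      exact hab
  have hinj : Function.Injective diag := by
    intro A B h
    have := congrFun h j0
    simpa [hdiag, Sigma.mk.inj_iff] using this
  have hcardV : Fintype.card V = r.choose s := by
    show Fintype.card {A : Finset (Fin r) // A.card = s} = r.choose s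
    rw [Fintype.card_finset_len, Fintype.card_fin]
  have hncard : (Set.range diag).ncard = r.choose s := by
    rw [← Nat.card_coe_set_eq, Nat.card_range_of_injective hinj, Nat.card_eq_fintype_card,
      hcardV]
  refine ⟨indep, hncard, ?_⟩
  -- lower bound on independence number of the m-th power
  have hlow : r.choose s ≤ gIndepNum (gStrongPow G m) := by
    apply le_csSup
    · refine ⟨Fintype.card (Fin m → Σ _ : Fin m, V), ?_⟩
      rintro n ⟨t, rfl, -⟩
      exact t.card_le_univ
    · refine ⟨Finset.univ.image diag, ?_, ?_⟩
      · rw [Finset.card_image_of_injective _ hinj, Finset.card_univ, hcardV]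
      · rw [Finset.coe_image, Finset.coe_univ, Set.image_univ]
        exact indep
  rw [gShannonCapacity]
  have hm' : m - 1 + 1 = m := Nat.succ_pred_eq_of_pos hm
  have hbdd : BddAbove (Set.range fun k : ℕ =>
      (gIndepNum (gStrongPow G (k + 1)) : ℝ) ^ ((1 : ℝ) / (k + 1))) := by
    refine ⟨max 1 (Fintype.card (Σ _ : Fin m, V) : ℝ), ?_⟩
    rintro x ⟨k, rfl⟩
    set N := Fintype.card (Σ _ : Fin m, V) with hN
    have h1 : gIndepNum (gStrongPow G (k + 1)) ≤ N ^ (k + 1) :=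
      (gIndepNum_le_card _).trans_eq (by rw [Fintype.card_fun, Fintype.card_fin])
    have hk1 : ((k : ℝ) + 1) ≠ 0 := by positivity
    calc (gIndepNum (gStrongPow G (k + 1)) : ℝ) ^ ((1 : ℝ) / (k + 1))
        ≤ ((N : ℝ) ^ (k + 1)) ^ ((1 : ℝ) / (k + 1)) := by
          apply Real.rpow_le_rpow (by positivity) ?_ (by positivity)
          exact_mod_cast h1
      _ = (N : ℝ) := by
          rw [← Real.rpow_natCast (N : ℝ) (k + 1), ← Real.rpow_mul (by positivity)]
          push_cast
          rw [mul_one_div_cancel hk1, Real.rpow_one]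
      _ ≤ max 1 (N : ℝ) := le_max_right _ _
  apply le_ciSup_of_le hbdd (m - 1)
  have hexp : ((m - 1 : ℕ) : ℝ) + 1 = (m : ℝ) := by exact_mod_cast hm'
  rw [hm', hexp]

  exact Real.rpow_le_rpow (by positivity) (by exact_mod_cast hlow) (by positivity)
end

section
/- Let q be a prime, let r ≥ s ≥ 1 with s not divisible by q, and let m ≥ 1. For each j ∈ {1,…,m}, let G_j be a simple graph whose vertex set is the collection of all s-element subsets of {1,…,r}, such that whenever distinct vertices A and B are non-adjacent in G_j one has |A∩B| ≢ s (mod q). Then the Shannon capacity of the disjoint union satisfies c(G₁+⋯+G_m) ≤ m·∑_{i=0}^{q-1} C(r,i). -/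
open Polynomial Finset in
lemma polySpanDesc {F : Type*} [Field F] (n : ℕ) (p : F[X]) (h : p.degree < n) :
    ∃ e : ℕ → F, ∀ z : F, p.eval z =
      ∑ k ∈ Finset.range n, e k * ∏ i ∈ Finset.range k, (z - (i : F)) := by
  induction n generalizing p with
  | zero =>
      have hp : p = 0 := by
        by_contra hp
        exact absurd h (not_lt.2 (by simpa using Polynomial.zero_le_degree_iff.2 hp))
      exact ⟨fun _ => 0, by simp [hp]⟩
  | succ n ih =>
      set M : F[X] := ∏ i ∈ Finset.range n, (X - C (i : F)) with hM
      have hMmonic : M.Monic :=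
        monic_prod_of_monic _ _ fun i _ => monic_X_sub_C (i : F)
      have hMdeg : M.natDegree = n := by
        have h1 := natDegree_prod_of_monic (Finset.range n) (fun i => X - C (i:F))
          (fun i _ => monic_X_sub_C _)
        rw [hM, h1]
        calc ∑ i ∈ Finset.range n, ((fun i => X - C (i:F)) i).natDegree
            = ∑ i ∈ Finset.range n, 1 :=
              Finset.sum_congr rfl (fun x _ => natDegree_X_sub_C (x:F))
          _ = n := by simp
      have hdeg2 : (p - C (p.coeff n) * M).degree < n := by
        rw [Polynomial.degree_lt_iff_coeff_zero] at h ⊢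
        intro k hk
        rcases eq_or_lt_of_le hk with hk' | hk'
        · have : k = n := hk'.symm
          subst this
          have hMk : M.coeff k = 1 := by
            have := hMmonic.leadingCoeff
            rwa [Polynomial.leadingCoeff, hMdeg] at this
          simp [coeff_sub, coeff_C_mul, hMk]
        · have h1 : p.coeff k = 0 := h k hk'
          have h2 : M.coeff k = 0 := by
            apply Polynomial.coeff_eq_zero_of_natDegree_lt
            rw [hMdeg]; exact hk'
          simp [coeff_sub, coeff_C_mul, h1, h2]
      obtain ⟨e, he⟩ := ih _ hdeg2
      refine ⟨fun k => if k = n then p.coeff n else e k, fun z => ?_⟩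
      have hMeval : M.eval z = ∏ i ∈ Finset.range n, (z - (i : F)) := by
        simp [hM, eval_prod]
      have hthis := he z
      rw [eval_sub, eval_mul, eval_C] at hthis
      have hstep : (∑ x ∈ Finset.range (n+1),
            (fun k => if k = n then p.coeff n else e k) x * ∏ i ∈ Finset.range x, (z - (i:F)))
          = (∑ k ∈ Finset.range n, e k * ∏ i ∈ Finset.range k, (z - (i:F)))
            + p.coeff n * ∏ i ∈ Finset.range n, (z - (i:F)) := by
        rw [Finset.sum_range_succ]
        congr 1
        · exact Finset.sum_congr rfl fun k hk => by simp [(Finset.mem_range.1 hk).ne]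
        · simp
      rw [hstep, ← hthis, hMeval]
      ring


lemma cast_descFactorial {R : Type*} [CommRing R] (n k : ℕ) :
    ((n.descFactorial k : ℕ) : R) = ∏ i ∈ Finset.range k, ((n : R) - (i : R)) := by
  induction k with
  | zero => simp
  | succ k ih =>
    rw [Finset.prod_range_succ, ← ih]
    rcases lt_or_ge n k with h | h
    · have h0 : n.descFactorial k = 0 := Nat.descFactorial_eq_zero_iff_lt.2 h
      simp [Nat.descFactorial_succ, h0]
    · rw [Nat.descFactorial_succ, Nat.cast_mul, Nat.cast_sub h]
      ring

open Finset in
lemma choose_cast_eq_sum {R : Type*} [CommRing R] {r : ℕ} (A B : Finset (Fin r)) (k : ℕ) :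
    (((A ∩ B).card.choose k : ℕ) : R)
      = ∑ S ∈ A.powersetCard k, (if S ⊆ B then (1 : R) else 0) := by
  classical
  rw [Finset.sum_boole]
  have hf : (A.powersetCard k).filter (· ⊆ B) = (A ∩ B).powersetCard k := by
    ext S
    simp only [Finset.mem_filter, Finset.mem_powersetCard, Finset.subset_inter_iff]
    tauto
  rw [hf]
  rw [Finset.card_powersetCard]

open Finset Polynomial in
lemma gfun_span (q s r : ℕ) [Fact q.Prime] (A : Finset (Fin r)) :
    ∃ c : (Σ k : Fin q, {S : Finset (Fin r) // S ∈ (Finset.univ : Finset (Fin r)).powersetCard (k : ℕ)}) → ZMod q,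
      ∀ B : Finset (Fin r),
        (∏ i ∈ (Finset.range q).erase (s % q), (((A ∩ B).card : ZMod q) - (i : ZMod q)))
          = ∑ t, c t * (if t.2.1 ⊆ B then 1 else 0) := by
  classical
  have hq : 0 < q := (Fact.out : q.Prime).pos
  set F := ZMod q
  set T : Finset ℕ := (Finset.range q).erase (s % q) with hT
  set p : F[X] := ∏ i ∈ T, (X - C (i : F)) with hp
  have hpmonic : p.Monic := monic_prod_of_monic _ _ fun i _ => monic_X_sub_C (i : F)
  have hpdeg : p.natDegree = T.card := by
    have h1 := natDegree_prod_of_monic T (fun i => X - C (i:F))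
      (fun i _ => monic_X_sub_C _)
    rw [hp, h1]
    calc ∑ i ∈ T, ((fun i => X - C (i:F)) i).natDegree
        = ∑ i ∈ T, 1 := Finset.sum_congr rfl (fun x _ => natDegree_X_sub_C (x:F))
      _ = T.card := by simp
  have hdeg : p.degree < q := by
    rw [Polynomial.degree_eq_natDegree hpmonic.ne_zero, hpdeg]
    have : T.card < q := by
      have := Finset.card_erase_of_mem (Finset.mem_range.2 (Nat.mod_lt s hq))
      rw [hT, this, Finset.card_range]
      omega
    exact_mod_cast this
  obtain ⟨e, he⟩ := polySpanDesc q p hdeg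
  refine ⟨fun t => if t.2.1 ⊆ A then e t.1 * (Nat.factorial (t.1 : ℕ) : F) else 0, fun B => ?_⟩
  have hlhs : (∏ i ∈ T, (((A ∩ B).card : F) - (i : F))) = p.eval ((A ∩ B).card : F) := by
    simp [hp, eval_prod]
  rw [hlhs, he]
  -- RHS: sum over sigma type
  rw [← Finset.univ_sigma_univ, Finset.sum_sigma]
  rw [← Fin.sum_univ_eq_sum_range
    (fun k => e k * ∏ i ∈ Finset.range k, (((A ∩ B).card : F) - (i : F))) q]
  apply Finset.sum_congr rfl
  intro k _
  rw [Finset.sum_coe_sort _ (fun S => (if S ⊆ A then e k * (Nat.factorial (k : ℕ) : F) else 0) *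
      (if S ⊆ B then (1:F) else 0))]
  have hsub : A.powersetCard (k : ℕ) ⊆ (Finset.univ : Finset (Fin r)).powersetCard (k : ℕ) :=
    Finset.powersetCard_mono (Finset.subset_univ A)
  rw [← Finset.sum_subset hsub (by
    intro S hS hSA
    have : ¬ S ⊆ A := fun hc => hSA (Finset.mem_powersetCard.2
      ⟨hc, (Finset.mem_powersetCard.1 hS).2⟩)
    simp [this])]
  have : ∀ S ∈ A.powersetCard (k : ℕ),
      (if S ⊆ A then e k * (Nat.factorial (k : ℕ) : F) else 0) * (if S ⊆ B then (1:F) else 0)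
        = (e k * (Nat.factorial (k : ℕ) : F)) * (if S ⊆ B then (1:F) else 0) := by
    intro S hS
    rw [if_pos (Finset.mem_powersetCard.1 hS).1]
  rw [Finset.sum_congr rfl this, ← Finset.mul_sum, ← choose_cast_eq_sum]
  have hd : (((A ∩ B).card.descFactorial (k : ℕ) : ℕ) : F)
      = ∏ i ∈ Finset.range (k : ℕ), (((A ∩ B).card : F) - (i : F)) := cast_descFactorial _ _
  rw [Nat.descFactorial_eq_factorial_mul_choose, Nat.cast_mul] at hd
  rw [mul_assoc, hd]

open Finset in
lemma indep_card_le (q r s m : ℕ) (hq : q.Prime) (hqs : ¬ q ∣ s)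
    (G : Fin m → SimpleGraph {A : Finset (Fin r) // A.card = s})
    (hG : ∀ j, ∀ A B : {A : Finset (Fin r) // A.card = s}, A ≠ B → ¬ (G j).Adj A B →
      ¬ (A.1 ∩ B.1).card ≡ s [MOD q])
    (k : ℕ) (I : Finset (Fin k → Σ j : Fin m, {A : Finset (Fin r) // A.card = s}))
    (hI : (I : Set (Fin k → Σ j : Fin m, {A : Finset (Fin r) // A.card = s})).Pairwise
      (fun a b => ¬ (gStrongPow (gSigmaSum G) k).Adj a b)) :
    I.card ≤ (m * ∑ i ∈ Finset.range q, r.choose i) ^ k := by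
  classical
  haveI : Fact q.Prime := ⟨hq⟩
  let VT := (Σ j : Fin m, {A : Finset (Fin r) // A.card = s})
  set F := ZMod q
  set ι := (Fin m × Σ k' : Fin q,
    {S : Finset (Fin r) // S ∈ (Finset.univ : Finset (Fin r)).powersetCard (k' : ℕ)}) with hι
  -- the basic functions
  set g :(Σ j : Fin m, {A : Finset (Fin r) // A.card = s}) →(Σ j : Fin m, {A : Finset (Fin r) // A.card = s}) → F := fun x y => if x.1 = y.1 then
    ∏ i ∈ (Finset.range q).erase (s % q), (((x.2.1 ∩ y.2.1).card : F) - (i : F)) else 0 with hg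
  set E : ι →(Σ j : Fin m, {A : Finset (Fin r) // A.card = s}) → F := fun t y =>
    if y.1 = t.1 ∧ t.2.2.1 ⊆ y.2.1 then 1 else 0 with hE
  -- diagonal nonvanishing
  have hdiag : ∀ x : VT, g x x ≠ 0 := by
    intro x
    rw [hg]
    simp only [if_pos rfl]
    apply Finset.prod_ne_zero_iff.2
    intro i hi
    rw [Finset.inter_self, x.2.2]
    obtain ⟨hine, hilt⟩ := Finset.mem_erase.1 hi
    rw [Finset.mem_range] at hilt
    intro hzero
    have heq : ((s : F)) = (i : F) := by linear_combination hzero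
    have hmod : s ≡ i [MOD q] := (ZMod.natCast_eq_natCast_iff _ _ _).1 heq
    rw [Nat.ModEq, Nat.mod_eq_of_lt hilt] at hmod
    exact hine hmod.symm
  -- off-diagonal vanishing on non-edges
  have hoff : ∀ x y : VT, x ≠ y → ¬ (gSigmaSum G).Adj x y → g x y = 0 := by
    rintro ⟨j, A⟩ ⟨j', B⟩ hne hnadj
    rw [hg]
    by_cases hjj : j = j'
    · subst hjj
      simp only [if_pos rfl]
      have hAB : A ≠ B := fun hc => hne (by rw [hc])
      have hnadj' : ¬ (G j).Adj A B := by
        intro hadj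
        exact hnadj ⟨j, A, B, hadj, rfl, rfl⟩
      have hmod := hG j A B hAB hnadj'
      have hcardlt : (A.1 ∩ B.1).card % q ∈ (Finset.range q).erase (s % q) := by
        refine Finset.mem_erase.2 ⟨?_, Finset.mem_range.2 (Nat.mod_lt _ hq.pos)⟩
        intro hc
        exact hmod (by rwa [Nat.ModEq])
      apply Finset.prod_eq_zero hcardlt
      have hcast : (((A.1 ∩ B.1).card % q : ℕ) : F) = (((A.1 ∩ B.1).card : ℕ) : F) :=
        ZMod.natCast_mod _ _
      rw [hcast]
      ring
    · simp only [if_neg hjj]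
  -- span property
  have hspan : ∀ x : VT, ∃ c : ι → F, ∀ y : VT, g x y = ∑ t, c t * E t y := by
    intro x
    obtain ⟨c₀, hc₀⟩ := gfun_span q s r x.2.1
    refine ⟨fun t => if t.1 = x.1 then c₀ t.2 else 0, fun y => ?_⟩
    rw [Fintype.sum_prod_type]
    by_cases hxy : y.1 = x.1
    · rw [Finset.sum_eq_single x.1]
      · rw [hg]
        simp only [if_pos hxy.symm]
        rw [hc₀ y.2.1]
        refine Finset.sum_congr rfl fun t _ => ?_
        simp [hE, hxy]
      · intro j _ hjne
        apply Finset.sum_eq_zero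
        intro t _
        simp [hjne]
      · intro h
        exact absurd (Finset.mem_univ _) h
    · have hcond : ¬ x.1 = y.1 := fun hc => hxy hc.symm
      simp only [hg, if_neg hcond]
      symm
      apply Finset.sum_eq_zero
      intro j _
      apply Finset.sum_eq_zero
      intro t _
      by_cases hj : j = x.1
      · have hne : ¬ (y.1 = j ∧ (t.2.1 : Finset (Fin r)) ⊆ y.2.1) :=
          fun hc => hxy (hc.1.trans hj)
        simp [hE, hne]
      · simp [hj]
  -- tensor functions
  set w : (Fin k → VT) → ((Fin k → VT) → F) := fun u v => ∏ i, g (u i) (v i) with hw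
  have hwdiag : ∀ u, w u u ≠ 0 := fun u =>
    Finset.prod_ne_zero_iff.2 (fun i _ => hdiag (u i))
  have hwoff : ∀ u v : Fin k → VT, u ∈ I → v ∈ I → u ≠ v → w u v = 0 := by
    intro u v hu hv huv
    have hnadj : ¬ (gStrongPow (gSigmaSum G) k).Adj u v :=
      hI (Finset.mem_coe.2 hu) (Finset.mem_coe.2 hv) huv
    have hex : ∃ i, ¬ (u i = v i ∨ (gSigmaSum G).Adj (u i) (v i)) := by
      by_contra hcon
      push_neg at hcon
      exact hnadj ⟨huv, fun i => hcon i⟩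
    obtain ⟨i, hi⟩ := hex
    push_neg at hi
    rw [hw]
    exact Finset.prod_eq_zero (Finset.mem_univ i) (hoff _ _ hi.1 hi.2)
  have hli : LinearIndependent F (fun u : {u // u ∈ I} => w u.1) := by
    rw [Fintype.linearIndependent_iff]
    intro c hc u₀
    have hev := congrFun hc (u₀ : Fin k → VT)
    rw [Finset.sum_apply] at hev
    simp only [Pi.smul_apply, smul_eq_mul] at hev
    rw [Finset.sum_eq_single u₀ (fun u _ hne => by
        rw [hwoff u.1 u₀.1 u.2 u₀.2 (fun hc' => hne (Subtype.ext hc'))]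
        ring)
      (fun h => absurd (Finset.mem_univ _) h)] at hev
    rcases mul_eq_zero.1 hev with h | h
    · exact h
    · exact absurd h (hwdiag u₀.1)
  set Et : (Fin k → ι) → ((Fin k → VT) → F) := fun t v => ∏ i, E (t i) (v i) with hEt
  have hwspan : ∀ u : Fin k → VT, w u ∈ Submodule.span F (Set.range Et) := by
    intro u
    choose c hc using hspan
    rw [Submodule.mem_span_range_iff_exists_fun]
    refine ⟨fun t => ∏ i, c (u i) (t i), ?_⟩
    funext v
    rw [Finset.sum_apply]
    simp only [Pi.smul_apply, smul_eq_mul]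
    have h1 : w u v = ∏ i, ∑ t : ι, c (u i) t * E t (v i) := by
      rw [hw]
      exact Finset.prod_congr rfl fun i _ => hc (u i) (v i)
    rw [h1, Finset.prod_univ_sum]
    rw [Fintype.piFinset_univ]
    symm
    apply Finset.sum_congr rfl
    intro t _
    rw [Finset.prod_mul_distrib, hEt]
  haveI : FiniteDimensional F (Submodule.span F (Set.range Et)) :=
    FiniteDimensional.span_of_finite F (Set.finite_range Et)
  have hli' : LinearIndependent F
      (fun u : {u // u ∈ I} => (⟨w u.1, hwspan u.1⟩ : Submodule.span F (Set.range Et))) := by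
    apply LinearIndependent.of_comp (Submodule.span F (Set.range Et)).subtype
    exact hli
  have hcard1 : Fintype.card {u // u ∈ I} ≤ Module.finrank F (Submodule.span F (Set.range Et)) :=
    hli'.fintype_card_le_finrank
  have hcard2 : Module.finrank F (Submodule.span F (Set.range Et))
      ≤ (Set.range Et).toFinset.card := finrank_span_le_card _
  have hcard3 : (Set.range Et).toFinset.card ≤ Fintype.card (Fin k → ι) := by
    rw [Set.toFinset_range]
    exact (Finset.card_image_le).trans (by simp)
  have hcardι : Fintype.card ι = m * ∑ i ∈ Finset.range q, r.choose i := by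
    rw [show (Fintype.card ι : ℕ) = Fintype.card (Fin m) * Fintype.card (Σ k' : Fin q, {S : Finset (Fin r) // S ∈ (Finset.univ : Finset (Fin r)).powersetCard (k' : ℕ)}) from Fintype.card_prod _ _, Fintype.card_fin, Fintype.card_sigma]
    congr 1
    rw [← Fin.sum_univ_eq_sum_range (fun i => r.choose i) q]
    apply Finset.sum_congr rfl
    intro k' _
    rw [Fintype.card_coe, Finset.card_powersetCard, Finset.card_univ, Fintype.card_fin]
  calc I.card = Fintype.card {u // u ∈ I} := (Fintype.card_coe I).symm
    _ ≤ Module.finrank F (Submodule.span F (Set.range Et)) := hcard1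
    _ ≤ (Set.range Et).toFinset.card := hcard2
    _ ≤ Fintype.card (Fin k → ι) := hcard3
    _ = Fintype.card ι ^ k := by rw [Fintype.card_fun, Fintype.card_fin]
    _ = (m * ∑ i ∈ Finset.range q, r.choose i) ^ k := by rw [hcardι]

/-- Let `q` be a prime, `r ≥ s ≥ 1` with `q ∤ s`, and `m ≥ 1`.  If each `G j` is a graph
on the `s`-element subsets of `{1, …, r}` such that distinct non-adjacent vertices `A`, `B`
satisfy `|A ∩ B| ≢ s (mod q)`, then `c(G₁ + ⋯ + G_m) ≤ m · ∑_{i = 0}^{q - 1} C(r, i)`. -/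
theorem shannonCapacity_sigmaSum_le
    (q r s m : ℕ) (hq : q.Prime) (hs : 1 ≤ s) (hsr : s ≤ r) (hqs : ¬ q ∣ s) (hm : 1 ≤ m)
    (G : Fin m → SimpleGraph {A : Finset (Fin r) // A.card = s})
    (hG : ∀ j, ∀ A B : {A : Finset (Fin r) // A.card = s}, A ≠ B → ¬ (G j).Adj A B →
      ¬ (A.1 ∩ B.1).card ≡ s [MOD q]) :
    gShannonCapacity (gSigmaSum G) ≤ (m * ∑ i ∈ Finset.range q, r.choose i : ℕ) := by
  classical
  set N := (m * ∑ i ∈ Finset.range q, r.choose i : ℕ) with hN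
  have hα : ∀ n : ℕ, gIndepNum (gStrongPow (gSigmaSum G) n) ≤ N ^ n := by
    intro n
    apply csSup_le
    · exact ⟨0, ∅, by simp⟩
    · rintro x ⟨I, rfl, hI⟩
      exact indep_card_le q r s m hq hqs G hG n I hI
  rw [gShannonCapacity]
  apply ciSup_le
  intro k
  have h1 : (gIndepNum (gStrongPow (gSigmaSum G) (k+1)) : ℝ) ≤ (N : ℝ) ^ ((k+1 : ℕ)) := by
    exact_mod_cast hα (k+1)
  have h2 : (gIndepNum (gStrongPow (gSigmaSum G) (k+1)) : ℝ) ^ ((1:ℝ)/(k+1))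
      ≤ ((N : ℝ) ^ ((k+1 : ℕ))) ^ ((1:ℝ)/(k+1)) :=
    Real.rpow_le_rpow (by positivity) h1 (by positivity)
  refine h2.trans ?_
  rw [← Real.rpow_natCast (N : ℝ) (k+1), ← Real.rpow_mul (by positivity)]
  have h3 : ((k+1 : ℕ) : ℝ) * ((1:ℝ)/(k+1)) = 1 := by
    push_cast
    field_simp
  rw [h3, Real.rpow_one]
end
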